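/- Minimality equals properness: among all tuples 𝐤 = (k_0,…,k_r) of distinct elements of {0,…,n+1} with k_r ∈ {0,n+1} representing a fixed onto extended quota majority method φ (i.e., φ_𝐤 = φ), a tuple has minimum length r if and only if it is proper (satisfies the alternating up-down condition). In particular any non-proper representation admits a strictly shorter representation of the same function obtained by deleting one entry. -/

import Mathlib

/-- Number of voters preferring alternative `a`. -/
def countA (n : ℕ) (P : Fin n → Option Bool) : ℕ :=
  (Finset.univ.filter fun v => P v = some true).card

/-- Number of voters preferring alternative `b`. -/
def countB (n : ℕ) (P : Fin n → Option Bool) : ℕ :=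
  (Finset.univ.filter fun v => P v = some false).card

/-- The defining condition at quota `k`: at least `k` voters prefer `a`
or at least `n + 1 - k` voters prefer `b`. -/
def hits (n : ℕ) (P : Fin n → Option Bool) (k : ℕ) : Bool :=
  decide (k ≤ countA n P ∨ n + 1 - k ≤ countB n P)

/-- The (generalized) extended quota majority method attached to a list of quotas:
find the least index whose quota condition holds, and output `true` (= a) iff the
a-branch of that condition holds. -/
def phi (n : ℕ) (l : List ℕ) (P : Fin n → Option Bool) : Bool :=
  decide (l.getD (l.findIdx (hits n P)) (n + 1) ≤ countA n P)

/-- A valid tuple for an extended quota majority method: nonempty, distinct entries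
from `{0, …, n+1}`, last entry in `{0, n+1}`. -/
def Valid (n : ℕ) (l : List ℕ) : Prop :=
  l ≠ [] ∧ l.Nodup ∧ (∀ x ∈ l, x ≤ n + 1) ∧
    (l.getLast? = some 0 ∨ l.getLast? = some (n + 1))

/-- A tuple `(k_0, k_1, …, k_t)` is proper: at least two entries, distinct entries
from `{0, …, n+1}`, last entry in `{0, n+1}`, any two consecutive entries of the
tail `k_1, k_2, …` lie strictly on opposite sides of `k_0`, and along each side the
entries become strictly more extreme. -/
def Proper (n : ℕ) (l : List ℕ) : Prop :=
  2 ≤ l.length ∧ l.Nodup ∧ (∀ x ∈ l, x ≤ n + 1) ∧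
  (l.getLast? = some 0 ∨ l.getLast? = some (n + 1)) ∧
  (∀ i, i + 2 < l.length →
    (l.getD (i + 1) 0 < l.getD 0 0 ∧ l.getD 0 0 < l.getD (i + 2) 0) ∨
    (l.getD (i + 2) 0 < l.getD 0 0 ∧ l.getD 0 0 < l.getD (i + 1) 0)) ∧
  (∀ i, i + 3 < l.length →
    (l.getD (i + 1) 0 < l.getD 0 0 → l.getD (i + 3) 0 < l.getD (i + 1) 0) ∧
    (l.getD 0 0 < l.getD (i + 1) 0 → l.getD (i + 1) 0 < l.getD (i + 3) 0))

/-- Tuples considered in the minimality statement: at least two distinct entries,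
all entries except the last lie in `{1, …, n}`, and the last entry is `0` or `n+1`
(so the "length", the least index of an extreme entry, is `l.length - 1`). -/
def Valid19 (n : ℕ) (l : List ℕ) : Prop :=
  2 ≤ l.length ∧ l.Nodup ∧ (∀ x ∈ l.dropLast, 1 ≤ x ∧ x ≤ n) ∧
  (l.getLast? = some 0 ∨ l.getLast? = some (n + 1))

namespace S19

def R (A s : ℕ) : List ℕ → Bool
  | [] => false
  | k :: t => if k ≤ A then true else if A + s < k then false else R A s t

lemma R_cons (A s k : ℕ) (t : List ℕ) :
    R A s (k :: t) = if k ≤ A then true else if A + s < k then false else R A s t := rfl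

lemma R_skip {A s : ℕ} {u : List ℕ} (h : ∀ x ∈ u, A < x ∧ x ≤ A + s) (v : List ℕ) :
    R A s (u ++ v) = R A s v := by
  induction u with
  | nil => rfl
  | cons a u ih =>
    have ha := h a (by simp)
    simp only [List.cons_append, R_cons]
    rw [if_neg (by omega), if_neg (by omega)]
    exact ih (fun x hx => h x (by simp [hx]))

lemma R_congr {A s : ℕ} {u v w : List ℕ}
    (h : (∀ x ∈ u, A < x ∧ x ≤ A + s) → R A s v = R A s w) :
    R A s (u ++ v) = R A s (u ++ w) := by
  induction u with
  | nil => simpa using h (by simp)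
  | cons a u ih =>
    simp only [List.cons_append, R_cons]
    by_cases h1 : a ≤ A
    · simp [h1]
    · by_cases h2 : A + s < a
      · simp [h1, h2]
      · rw [if_neg h1, if_neg h2, if_neg h1, if_neg h2]
        refine ih (fun hu => h ?_)
        intro x hx
        rcases List.mem_cons.mp hx with rfl | hx
        · exact ⟨by omega, by omega⟩
        · exact hu x hx

lemma count_le {n : ℕ} (P : Fin n → Option Bool) : countA n P + countB n P ≤ n := by
  unfold countA countB
  rw [← Finset.card_union_of_disjoint]
  · exact le_trans (Finset.card_le_card (Finset.subset_univ _)) (by simp)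
  · rw [Finset.disjoint_left]
    intro v hv hv'
    simp only [Finset.mem_filter] at hv hv'
    rw [hv.2] at hv'
    simp at hv'

lemma card_filter_lt (n c : ℕ) (hc : c ≤ n) :
    (Finset.univ.filter (fun v : Fin n => (v : ℕ) < c)).card = c := by
  have e : (Finset.univ.filter (fun v : Fin n => (v : ℕ) < c)) =
      (Finset.range c).attachFin (fun m hm => lt_of_lt_of_le (Finset.mem_range.mp hm) hc) := by
    ext v
    simp [Finset.mem_attachFin]
  rw [e, Finset.card_attachFin, Finset.card_range]

def prof (n A B : ℕ) : Fin n → Option Bool := fun v =>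
  if (v : ℕ) < A then some true else if (v : ℕ) < A + B then some false else none

lemma countA_prof {n A B : ℕ} (h : A + B ≤ n) : countA n (prof n A B) = A := by
  unfold countA prof
  have e : (Finset.univ.filter fun v : Fin n =>
      (if (v:ℕ) < A then some true else if (v:ℕ) < A + B then some false else none) = some true)
      = Finset.univ.filter (fun v : Fin n => (v:ℕ) < A) := by
    ext v
    simp only [Finset.mem_filter, Finset.mem_univ, true_and]
    split_ifs with h1 h2 <;> simp <;> omega
  rw [e, card_filter_lt n A (by omega)]

lemma countB_prof {n A B : ℕ} (h : A + B ≤ n) : countB n (prof n A B) = B := by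
  unfold countB prof
  have e : (Finset.univ.filter fun v : Fin n =>
      (if (v:ℕ) < A then some true else if (v:ℕ) < A + B then some false else none) = some false)
      = (Finset.univ.filter fun v : Fin n => (v:ℕ) < A + B) \
        (Finset.univ.filter fun v : Fin n => (v:ℕ) < A) := by
    ext v
    simp only [Finset.mem_filter, Finset.mem_sdiff, Finset.mem_univ, true_and]
    split_ifs with h1 h2 <;> simp <;> omega
  rw [e, Finset.card_sdiff_of_subset, card_filter_lt n (A+B) h, card_filter_lt n A (by omega)]
  · omega
  · intro v hv
    simp only [Finset.mem_filter, Finset.mem_univ, true_and] at hv ⊢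
    omega

lemma hits_eq {n : ℕ} (P : Fin n → Option Bool) (k : ℕ) :
    hits n P k = decide (k ≤ countA n P ∨ countA n P + (n - (countA n P + countB n P)) + 1 ≤ k) := by
  have hc := count_le P
  simp only [hits, decide_eq_decide]
  omega

lemma phi_R_aux (A s d : ℕ) : ∀ l : List ℕ, (∃ x ∈ l, x ≤ A ∨ A + s + 1 ≤ x) →
    decide (l.getD (l.findIdx fun k => decide (k ≤ A ∨ A + s + 1 ≤ k)) d ≤ A) = R A s l := by
  intro l
  induction l with
  | nil => simp
  | cons a t ih =>
    intro hex
    by_cases pa : a ≤ A ∨ A + s + 1 ≤ a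
    · rw [List.findIdx_cons]
      simp only [pa, decide_true, cond_true, List.getD_cons_zero, R_cons]
      rcases pa with pa | pa
      · simp [pa]
      · rw [if_neg (by omega), if_pos (by omega)]
        simp; omega
    · rw [List.findIdx_cons]
      simp only [pa, decide_false, cond_false, List.getD_cons_succ, R_cons]
      rw [if_neg (by omega), if_neg (by omega)]
      apply ih
      rcases hex with ⟨x, hx, hxp⟩
      rcases List.mem_cons.mp hx with rfl | hx
      · exact absurd hxp pa
      · exact ⟨x, hx, hxp⟩

lemma phi_eq_R {n : ℕ} {l : List ℕ}
    (hl : l.getLast? = some 0 ∨ l.getLast? = some (n+1)) (P : Fin n → Option Bool) :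
    phi n l P = R (countA n P) (n - (countA n P + countB n P)) l := by
  have hc := count_le P
  unfold phi
  have hfun : hits n P = fun k => decide (k ≤ countA n P ∨ countA n P + (n - (countA n P + countB n P)) + 1 ≤ k) :=
    funext (hits_eq P)
  rw [hfun]
  apply phi_R_aux
  rcases hl with hl | hl
  · exact ⟨0, List.mem_of_getLast? hl, Or.inl (by omega)⟩
  · exact ⟨n+1, List.mem_of_getLast? hl, Or.inr (by omega)⟩

lemma R_eq_of_phi_eq {n : ℕ} {l l' : List ℕ}
    (hl : l.getLast? = some 0 ∨ l.getLast? = some (n+1))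
    (hl' : l'.getLast? = some 0 ∨ l'.getLast? = some (n+1))
    (h : phi n l' = phi n l) :
    ∀ A s, A + s ≤ n → R A s l' = R A s l := by
  intro A s hAs
  have hP := congrFun h (prof n A (n - s - A))
  rw [phi_eq_R hl' _, phi_eq_R hl _] at hP
  rw [countA_prof (by omega), countB_prof (by omega)] at hP
  have e : n - (A + (n - s - A)) = s := by omega
  rwa [e] at hP


lemma chain_mono {m : ℕ} {A S : ℕ → ℕ} (hA : ∀ i < m, A (i+1) ≤ A i)
    (hS : ∀ i < m, A i + S i ≤ A (i+1) + S (i+1)) :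
    ∀ i j, i ≤ j → j ≤ m → A j ≤ A i ∧ A i + S i ≤ A j + S j := by
  intro i j hij hjm
  induction j with
  | zero => have : i = 0 := by omega
            subst this; omega
  | succ p ih =>
    rcases Nat.eq_or_lt_of_le hij with rfl | hlt
    · omega
    · have h1 := ih (by omega) (by omega)
      have h2 := hA p (by omega)
      have h3 := hS p (by omega)
      omega

lemma LB {n : ℕ} : ∀ (t : List ℕ), (t.getLast? = some 0 ∨ t.getLast? = some (n+1)) →
    (∀ x ∈ t.dropLast, 1 ≤ x ∧ x ≤ n) →
    ∀ (m : ℕ) (A S : ℕ → ℕ), (∀ i < m, A (i+1) ≤ A i) → (∀ i < m, A i + S i ≤ A (i+1) + S (i+1)) →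
    (∀ i ≤ m, A i + S i ≤ n) →
    (∀ i < m, R (A (i+1)) (S (i+1)) t = !(R (A i) (S i) t)) →
    m + 1 ≤ t.length := by
  intro t
  induction t with
  | nil => intro hlast; simp at hlast
  | cons k u ih =>
    intro hlast hmem m A S hA hS hn hflip
    rcases Nat.eq_zero_or_pos m with rfl | hm
    · simp
    match u, ih with
    | [], _ =>
      -- t = [k], k = 0 or n+1, R is constant, contradicting a flip
      exfalso
      have hk : k = 0 ∨ k = n + 1 := by simpa using hlast
      have hconst : ∀ j ≤ m, R (A j) (S j) [k] = decide (k = 0) := by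
        intro j hj
        rcases hk with rfl | rfl
        · simp [R_cons]
        · rw [R_cons, if_neg (by have := hn j hj; omega), if_pos (by have := hn j hj; omega)]
          simp
      have h0 := hflip 0 hm
      rw [hconst 0 (by omega), hconst 1 (by omega)] at h0
      simp at h0
    | b :: u2, ih =>
      set u := b :: u2 with hu
      have hune : u ≠ [] := by simp [hu]
      have hlast' : u.getLast? = some 0 ∨ u.getLast? = some (n+1) := by
        rwa [hu, List.getLast?_cons_cons] at hlast
      have hmem' : ∀ x ∈ u.dropLast, 1 ≤ x ∧ x ≤ n := by
        intro x hx
        apply hmem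
        rw [List.dropLast_cons_of_ne_nil hune]
        exact List.mem_cons_of_mem _ hx
      have hk : 1 ≤ k ∧ k ≤ n := by
        apply hmem
        rw [List.dropLast_cons_of_ne_nil hune]
        exact List.mem_cons_self
      have hmono := chain_mono hA hS
      -- k is inside J_1
      have hin1 : A 1 < k ∧ k ≤ A 1 + S 1 := by
        have h01 := hmono 0 1 (by omega) (by omega)
        have h1 := hflip 0 hm
        simp only [Nat.zero_add] at h1
        by_cases hc1 : k ≤ A 0
        · have h0 : R (A 0) (S 0) (k :: u) = true := by
            rw [R_cons, if_pos hc1]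
          rw [h0] at h1
          constructor
          · by_contra hc
            rw [R_cons, if_pos (by omega)] at h1
            simp at h1
          · omega
        · by_cases hks : k ≤ A 0 + S 0
          · constructor <;> omega
          · have h0 : R (A 0) (S 0) (k :: u) = false := by
              rw [R_cons, if_neg hc1, if_pos (by omega)]
            rw [h0] at h1
            constructor
            · omega
            · by_contra hc
              rw [R_cons, if_neg (by omega), if_pos (by omega)] at h1
              simp at h1
      have hin : ∀ j, 1 ≤ j → j ≤ m → R (A j) (S j) (k :: u) = R (A j) (S j) u := by
        intro j hj1 hj2
        have m1 := hmono 1 j hj1 hj2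
        rw [R_cons, if_neg (by omega), if_neg (by omega)]
      have key : (m - 1) + 1 ≤ u.length := by
        apply ih hlast' hmem' (m-1) (fun i => A (i+1)) (fun i => S (i+1))
        · intro i hi; exact hA (i+1) (by omega)
        · intro i hi; exact hS (i+1) (by omega)
        · intro i hi; exact hn (i+1) (by omega)
        · intro i hi
          have e1 := hflip (i+1) (by omega)
          rw [hin (i+1) (by omega) (by omega), hin (i+1+1) (by omega) (by omega)] at e1
          exact e1
      simp only [List.length_cons]
      omega


/-! ### index and foldr helpers -/

def K (l : List ℕ) (i : ℕ) : ℕ := l.getD i 0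

lemma K_eq (l : List ℕ) {i : ℕ} (h : i < l.length) : K l i = l[i] :=
  List.getD_eq_getElem l 0 h

lemma foldr_min_le_d (u : List ℕ) (d : ℕ) : u.foldr min d ≤ d := by
  induction u with
  | nil => simp
  | cons a u ih => exact le_trans (min_le_right _ _) ih

lemma foldr_min_le_mem {u : List ℕ} {x : ℕ} (d : ℕ) (hx : x ∈ u) : u.foldr min d ≤ x := by
  induction u with
  | nil => simp at hx
  | cons a u ih =>
    rcases List.mem_cons.mp hx with rfl | hx
    · exact min_le_left _ _
    · exact le_trans (min_le_right _ _) (ih hx)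

lemma lt_foldr_min {u : List ℕ} {c d : ℕ} (hd : c < d) (h : ∀ x ∈ u, c < x) :
    c < u.foldr min d := by
  induction u with
  | nil => simpa
  | cons a u ih =>
    exact lt_min (h a (by simp)) (ih (fun x hx => h x (by simp [hx])))

lemma le_foldr_max_d (u : List ℕ) (d : ℕ) : d ≤ u.foldr max d := by
  induction u with
  | nil => simp
  | cons a u ih => exact le_trans ih (le_max_right _ _)

lemma le_foldr_max_mem {u : List ℕ} {x : ℕ} (d : ℕ) (hx : x ∈ u) : x ≤ u.foldr max d := by
  induction u with
  | nil => simp at hx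
  | cons a u ih =>
    rcases List.mem_cons.mp hx with rfl | hx
    · exact le_max_left _ _
    · exact le_trans (ih hx) (le_max_right _ _)

lemma foldr_max_lt {u : List ℕ} {c d : ℕ} (hd : d < c) (h : ∀ x ∈ u, x < c) :
    u.foldr max d < c := by
  induction u with
  | nil => simpa
  | cons a u ih =>
    exact max_lt (h a (by simp)) (ih (fun x hx => h x (by simp [hx])))

lemma foldr_min_subset {u v : List ℕ} (d : ℕ) (h : u ⊆ v) :
    v.foldr min d ≤ u.foldr min d := by
  induction u with
  | nil => exact foldr_min_le_d v d
  | cons a u ih =>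
    exact le_min (foldr_min_le_mem d (h (by simp)))
      (ih (fun x hx => h (by simp [hx])))

lemma foldr_max_subset {u v : List ℕ} (d : ℕ) (h : u ⊆ v) :
    u.foldr max d ≤ v.foldr max d := by
  induction u with
  | nil => exact le_foldr_max_d v d
  | cons a u ih =>
    exact max_le (le_foldr_max_mem d (h (by simp)))
      (ih (fun x hx => h (by simp [hx])))

lemma take_subset_succ (l : List ℕ) (i : ℕ) : l.take i ⊆ l.take (i+1) := by
  intro x hx
  have h := List.take_take (i := i) (j := i+1) (l := l)
  rw [min_eq_left (by omega)] at h
  rw [← h] at hx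
  exact List.take_subset _ _ hx

lemma mem_take_K {l : List ℕ} {j γ : ℕ} (h1 : j < γ) (h2 : j < l.length) :
    K l j ∈ l.take γ := by
  rw [K_eq l h2]
  rw [List.mem_iff_getElem]
  exact ⟨j, by simp; omega, by rw [List.getElem_take]⟩

lemma take_mem_K {l : List ℕ} {γ x : ℕ} (hx : x ∈ l.take γ) :
    ∃ j, j < γ ∧ j < l.length ∧ x = K l j := by
  rw [List.mem_iff_getElem] at hx
  obtain ⟨j, hj, he⟩ := hx
  simp only [List.length_take] at hj
  refine ⟨j, by omega, by omega, ?_⟩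
  rw [K_eq l (by omega), ← he, List.getElem_take]

/-! ### facts from Valid19 -/

section V19
variable {n : ℕ} {l : List ℕ}

lemma kbound (hv : Valid19 n l) : ∀ i, i + 1 < l.length → 1 ≤ K l i ∧ K l i ≤ n := by
  obtain ⟨hlen, hnd, hint, hlast⟩ := hv
  intro i hi
  have hdl : i < l.dropLast.length := by simp [List.length_dropLast]; omega
  have := hint (l.dropLast[i]) (List.getElem_mem hdl)
  rwa [List.getElem_dropLast, ← K_eq l (by omega)] at this

lemma klast (hv : Valid19 n l) : K l (l.length - 1) = 0 ∨ K l (l.length - 1) = n + 1 := by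
  obtain ⟨hlen, hnd, hint, hlast⟩ := hv
  have hne : l ≠ [] := by intro h; rw [h] at hlen; simp at hlen
  rw [List.getLast?_eq_getElem?] at hlast
  rw [K_eq l (by omega)]
  rcases hlast with h | h <;> [left; right] <;>
    simpa using (List.getElem?_eq_some_iff.mp h).2.symm ▸ rfl

lemma kne (hv : Valid19 n l) {i j : ℕ} (hij : i ≠ j) (hi : i < l.length) (hj : j < l.length) :
    K l i ≠ K l j := by
  rw [K_eq l hi, K_eq l hj]
  intro h
  exact hij ((hv.2.1.getElem_inj_iff).mp h)

lemma kmem (hv : Valid19 n l) {i : ℕ} (hi : i < l.length) : K l i ≤ n + 1 := by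
  rcases Nat.lt_or_ge (i+1) l.length with h | h
  · have := kbound hv i h; omega
  · have hi' : i = l.length - 1 := by omega
    rw [hi']
    rcases klast hv with h | h <;> omega

end V19

/-! ### consequences of Proper -/

section PROP
variable {n : ℕ} {l : List ℕ}

lemma F1 (hp : Proper n l) : ∀ γ, 1 ≤ γ → γ + 1 < l.length →
    ((K l γ < K l 0 ∧ K l 0 < K l (γ+1)) ∨ (K l (γ+1) < K l 0 ∧ K l 0 < K l γ)) := by
  intro γ h1 h2
  have h5 := hp.2.2.2.2.1 (γ - 1) (by omega)
  have e1 : γ - 1 + 1 = γ := by omega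
  have e2 : γ - 1 + 2 = γ + 1 := by omega
  rw [e1, e2] at h5
  exact h5

lemma F2' (hv : Valid19 n l) (hp : Proper n l) : ∀ d γ j, γ = j + d → 1 ≤ γ →
    γ + 1 < l.length → j < γ →
    ((K l γ < K l 0 → K l γ < K l j) ∧ (K l 0 < K l γ → K l j < K l γ)) := by
  intro d
  induction d using Nat.strong_induction_on with
  | _ d ihd =>
    intro γ j hγ h1 h2 h3
    rcases Nat.eq_zero_or_pos j with rfl | hj
    · exact ⟨fun h => h, fun h => h⟩
    rcases Nat.lt_or_ge d 2 with hd | hd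
    · -- d = 1, j = γ - 1
      have hd1 : γ = j + 1 := by omega
      subst hd1
      rcases F1 hp j hj (by omega) with ⟨a, b⟩ | ⟨a, b⟩ <;>
        constructor <;> intro h <;> omega
    · have H2 : (K l γ < K l 0 → K l γ ≤ K l (j+2)) ∧
          (K l 0 < K l γ → K l (j+2) ≤ K l γ) := by
        rcases Nat.eq_or_lt_of_le hd with hd2 | hd3
        · have e : j + 2 = γ := by omega
          rw [e]
          exact ⟨fun _ => le_rfl, fun _ => le_rfl⟩
        · have hh := ihd (d-2) (by omega) γ (j+2) (by omega) h1 h2 (by omega)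
          exact ⟨fun h => le_of_lt (hh.1 h), fun h => le_of_lt (hh.2 h)⟩
      have H6 : (K l j < K l 0 → K l (j+2) < K l j) ∧
          (K l 0 < K l j → K l j < K l (j+2)) := by
        have h6 := hp.2.2.2.2.2 (j-1) (by omega)
        have e1 : j - 1 + 1 = j := by omega
        have e3 : j - 1 + 3 = j + 2 := by omega
        rw [e1, e3] at h6
        exact h6
      have hne0 : K l j ≠ K l 0 := kne hv (by omega) (by omega) (by omega)
      constructor <;> intro h
      · rcases lt_trichotomy (K l j) (K l 0) with hc | hc | hc
        · have := H6.1 hc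
          have := H2.1 h
          omega
        · exact absurd hc hne0
        · omega
      · rcases lt_trichotomy (K l j) (K l 0) with hc | hc | hc
        · omega
        · exact absurd hc hne0
        · have := H6.2 hc
          have := H2.2 h
          omega
end PROP

/-! ### the alternating chain of intervals attached to a proper list -/

def lo (n : ℕ) (l : List ℕ) (γ : ℕ) : ℕ := (l.take γ).foldr min (n+1)
def hic (l : List ℕ) (γ : ℕ) : ℕ := (l.take γ).foldr max 0
def sd (l : List ℕ) (γ : ℕ) : Bool := decide (K l γ < K l 0)
def Af (n : ℕ) (l : List ℕ) (γ : ℕ) : ℕ :=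
  if γ = 0 then (if sd l 1 then K l 0 - 1 else K l 0) else lo n l γ - 1
def Sf (n : ℕ) (l : List ℕ) (γ : ℕ) : ℕ := if γ = 0 then 0 else hic l γ - Af n l γ

section CHAIN
variable {n : ℕ} {l : List ℕ}

lemma foldr_max_le {u : List ℕ} {c d : ℕ} (hd : d ≤ c) (h : ∀ x ∈ u, x ≤ c) :
    u.foldr max d ≤ c := by
  induction u with
  | nil => simpa
  | cons a u ih =>
    exact max_le (h a (by simp)) (ih (fun x hx => h x (by simp [hx])))

lemma take_bounds (hv : Valid19 n l) {γ : ℕ} (hγ : γ ≤ l.length - 1) :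
    ∀ x ∈ l.take γ, 1 ≤ x ∧ x ≤ n := by
  intro x hx
  apply hv.2.2.1
  rw [List.dropLast_eq_take]
  have h := List.take_take (i := γ) (j := l.length - 1) (l := l)
  rw [min_eq_left (by omega)] at h
  rw [← h] at hx
  exact List.take_subset _ _ hx

lemma lohi (hv : Valid19 n l) {γ : ℕ} (h1 : 1 ≤ γ) (h2 : γ ≤ l.length - 1) :
    1 ≤ lo n l γ ∧ hic l γ ≤ n ∧ lo n l γ ≤ K l 0 ∧ K l 0 ≤ hic l γ ∧
      (∀ x ∈ l.take γ, lo n l γ ≤ x ∧ x ≤ hic l γ) := by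
  have hb := take_bounds hv h2
  have hm0 : K l 0 ∈ l.take γ := mem_take_K (by omega) (by omega)
  refine ⟨?_, ?_, foldr_min_le_mem _ hm0, le_foldr_max_mem _ hm0,
    fun x hx => ⟨foldr_min_le_mem _ hx, le_foldr_max_mem _ hx⟩⟩
  · exact lt_foldr_min (by omega) (fun x hx => by have := hb x hx; omega)
  · exact foldr_max_le (by omega) (fun x hx => (hb x hx).2)

lemma ans_pos (hv : Valid19 n l) (hp : Proper n l) {γ : ℕ}
    (h1 : 1 ≤ γ) (h2 : γ ≤ l.length - 1) :
    R (Af n l γ) (Sf n l γ) l = sd l γ := by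
  have hlen := hv.1
  have hlh := lohi hv h1 h2
  have hK0 := kbound hv 0 (by omega)
  have hγ0 : ¬ γ = 0 := by omega
  have hA : Af n l γ = lo n l γ - 1 := by simp [Af, hγ0]
  have hASf : Af n l γ + Sf n l γ = hic l γ := by
    simp [Af, Sf, hγ0]; omega
  have hd : l.drop γ = K l γ :: l.drop (γ+1) := by
    rw [K_eq l (by omega)]
    exact List.drop_eq_getElem_cons (by omega)
  have hsplit : l = l.take γ ++ (K l γ :: l.drop (γ+1)) := by
    conv_lhs => rw [← List.take_append_drop γ l]
    rw [hd]
  rw [congrArg (R (Af n l γ) (Sf n l γ)) hsplit]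
  rw [R_skip (fun x hx => by have := hlh.2.2.2.2 x hx; omega)]
  by_cases hside : K l γ < K l 0
  · -- low side: K γ is below everything in the prefix
    have hlow : K l γ < lo n l γ := by
      rcases Nat.lt_or_ge (γ+1) l.length with hγl | hγl
      · have hKγ := kbound hv γ hγl
        apply lt_foldr_min (by omega)
        intro x hx
        obtain ⟨j, hjγ, hjl, rfl⟩ := take_mem_K hx
        rcases Nat.eq_zero_or_pos j with rfl | hj
        · exact hside
        · exact (F2' hv hp (γ - j) γ j (by omega) h1 hγl hjγ).1 hside
      · have : γ = l.length - 1 := by omega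
        subst this
        rcases klast hv with h | h
        · rw [h]; omega
        · rw [h] at hside; omega
    rw [R_cons, if_pos (by omega)]
    simp [sd, hside]
  · have hne0 : K l γ ≠ K l 0 := kne hv (by omega) (by omega) (by omega)
    have hside' : K l 0 < K l γ := by omega
    have hhigh : hic l γ < K l γ := by
      rcases Nat.lt_or_ge (γ+1) l.length with hγl | hγl
      · apply foldr_max_lt (by omega)
        intro x hx
        obtain ⟨j, hjγ, hjl, rfl⟩ := take_mem_K hx
        rcases Nat.eq_zero_or_pos j with rfl | hj
        · exact hside'
        · exact (F2' hv hp (γ - j) γ j (by omega) h1 hγl hjγ).2 hside'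
      · have : γ = l.length - 1 := by omega
        subst this
        rcases klast hv with h | h
        · rw [h] at hside'; omega
        · rw [h]; omega
    rw [R_cons, if_neg (by omega), if_pos (by omega)]
    simp [sd, hside]

lemma ans_zero (hv : Valid19 n l) :
    R (Af n l 0) (Sf n l 0) l = !(sd l 1) := by
  have hlen := hv.1
  have hK0 := kbound hv 0 (by omega)
  have hsplit : l = K l 0 :: l.drop 1 := by
    conv_lhs => rw [← List.take_append_drop 0 l]
    rw [List.take_zero, List.nil_append,
      List.drop_eq_getElem_cons (by omega : 0 < l.length), K_eq l (by omega)]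
  have hS0 : Sf n l 0 = 0 := by simp [Sf]
  rw [congrArg (R (Af n l 0) (Sf n l 0)) hsplit]
  by_cases hs1 : K l 1 < K l 0
  · have hsd : sd l 1 = true := by simp [sd, hs1]
    have hA0 : Af n l 0 = K l 0 - 1 := by simp [Af, hsd]
    rw [R_cons, hA0, hS0, if_neg (by omega), if_pos (by omega), hsd]
    rfl
  · have hsd : sd l 1 = false := by simp [sd, hs1]
    have hA0 : Af n l 0 = K l 0 := by simp [Af, hsd]
    rw [R_cons, hA0, if_pos (by omega), hsd]
    rfl

lemma proper_min {n : ℕ} {l l' : List ℕ} (hv : Valid19 n l) (hp : Proper n l)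
    (hv' : Valid19 n l')
    (hR : ∀ A s, A + s ≤ n → R A s l' = R A s l) : l.length ≤ l'.length := by
  have hlen := hv.1
  set r := l.length - 1 with hr
  have hr1 : 1 ≤ r := by omega
  have hK0 := kbound hv 0 (by omega)
  have hlo1 : lo n l 1 ≤ K l 0 := foldr_min_le_mem _ (mem_take_K (by omega) (by omega))
  have hhi1 : K l 0 ≤ hic l 1 := le_foldr_max_mem _ (mem_take_K (by omega) (by omega))
  have hA0b : K l 0 - 1 ≤ Af n l 0 ∧ Af n l 0 ≤ K l 0 := by
    by_cases hs1 : sd l 1 = true <;> simp [Af, hs1] <;> omega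
  have hASf : ∀ γ, 1 ≤ γ → γ ≤ r → Af n l γ + Sf n l γ = hic l γ := by
    intro γ h1 h2
    have hlh := lohi hv h1 h2
    simp [Af, Sf, show ¬ γ = 0 by omega]
    omega
  have hAf_eq : ∀ γ, 1 ≤ γ → Af n l γ = lo n l γ - 1 := by
    intro γ h1; simp [Af, show ¬ γ = 0 by omega]
  have hn' : ∀ i ≤ r, Af n l i + Sf n l i ≤ n := by
    intro i hi
    rcases Nat.eq_zero_or_pos i with rfl | h1
    · simp [Sf]; omega
    · rw [hASf i h1 hi]
      exact (lohi hv h1 hi).2.1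
  have hA' : ∀ i < r, Af n l (i+1) ≤ Af n l i := by
    intro i hi
    rcases Nat.eq_zero_or_pos i with rfl | h1
    · rw [hAf_eq 1 (by omega)]
      omega
    · rw [hAf_eq (i+1) (by omega), hAf_eq i (by omega)]
      have := foldr_min_subset (u := l.take i) (v := l.take (i+1)) (n+1) (take_subset_succ l i)
      simp only [lo]
      omega
  have hS' : ∀ i < r, Af n l i + Sf n l i ≤ Af n l (i+1) + Sf n l (i+1) := by
    intro i hi
    rcases Nat.eq_zero_or_pos i with rfl | h1
    · rw [hASf 1 (by omega) (by omega)]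
      simp [Sf]
      omega
    · rw [hASf i (by omega) (by omega), hASf (i+1) (by omega) (by omega)]
      exact foldr_max_subset _ (take_subset_succ l i)
  have hflip : ∀ i < r, R (Af n l (i+1)) (Sf n l (i+1)) l' = !(R (Af n l i) (Sf n l i) l') := by
    intro i hi
    rw [hR _ _ (hn' (i+1) (by omega)), hR _ _ (hn' i (by omega))]
    rcases Nat.eq_zero_or_pos i with rfl | h1
    · rw [ans_pos hv hp (by omega) (by omega), ans_zero hv]
      simp
    · rw [ans_pos hv hp (by omega) (by omega), ans_pos hv hp (by omega) (by omega)]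
      rcases F1 hp i h1 (by omega) with ⟨a, b⟩ | ⟨a, b⟩ <;>
        simp only [sd, ← decide_not, decide_eq_decide] <;> omega
  have := LB l' hv'.2.2.2 hv'.2.2.1 r (Af n l) (Sf n l) hA' hS' hn' hflip
  omega

end CHAIN

/-! ### deletion of a redundant entry -/

def Del (l : List ℕ) (γ : ℕ) : Prop :=
  ((∃ y ∈ l.take γ, K l γ < y) ∧ (K l (γ+1) < K l γ ∨ ∃ x ∈ l.take γ, x < K l γ)) ∨
  ((∃ x ∈ l.take γ, x < K l γ) ∧ (K l γ < K l (γ+1) ∨ ∃ y ∈ l.take γ, K l γ < y))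

section DEL
variable {n : ℕ} {l : List ℕ}

lemma del_R {γ : ℕ} (h1 : 1 ≤ γ) (h2 : γ + 1 < l.length) (hd : Del l γ) :
    ∀ A s, R A s (l.eraseIdx γ) = R A s l := by
  intro A s
  have hd1 : l.drop γ = K l γ :: l.drop (γ+1) := by
    rw [K_eq l (by omega)]
    exact List.drop_eq_getElem_cons (by omega)
  have hd2 : l.drop (γ+1) = K l (γ+1) :: l.drop (γ+2) := by
    rw [K_eq l (by omega)]
    exact List.drop_eq_getElem_cons (by omega)
  have hsplit : l = l.take γ ++ (K l γ :: l.drop (γ+1)) := by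
    conv_lhs => rw [← List.take_append_drop γ l]
    rw [hd1]
  rw [congrArg (R A s) hsplit, List.eraseIdx_eq_take_drop_succ]
  apply R_congr
  intro hins
  rcases hd with ⟨⟨y, hy, hgy⟩, hor⟩ | ⟨⟨x, hx, hxg⟩, hor⟩
  · have hyb := hins y hy
    by_cases hga : K l γ ≤ A
    · rw [R_cons, if_pos hga]
      rcases hor with hlt | ⟨x, hx, hxg⟩
      · rw [hd2, R_cons, if_pos (by omega)]
      · have := hins x hx
        omega
    · rw [R_cons, if_neg hga, if_neg (by omega)]
  · have hxb := hins x hx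
    by_cases hgs : K l γ ≤ A + s
    · rw [R_cons, if_neg (by omega), if_neg (by omega)]
    · rw [R_cons, if_neg (by omega), if_pos (by omega)]
      rcases hor with hlt | ⟨y, hy, hgy⟩
      · rw [hd2, R_cons, if_neg (by omega), if_pos (by omega)]
      · have := hins y hy
        omega

lemma del_valid (hv : Valid19 n l) {γ : ℕ} (h1 : 1 ≤ γ) (h2 : γ + 1 < l.length) :
    Valid19 n (l.eraseIdx γ) := by
  obtain ⟨hlen, hnd, hint, hlast⟩ := hv
  have hlene : (l.eraseIdx γ).length = l.length - 1 := by
    rw [List.length_eraseIdx]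
    simp [show γ < l.length by omega]
  have hdropne : l.drop (γ+1) ≠ [] := by
    intro h
    have := List.length_drop (i := γ+1) (l := l)
    rw [h] at this
    simp at this
    omega
  have he : l.eraseIdx γ = l.take γ ++ l.drop (γ+1) := List.eraseIdx_eq_take_drop_succ l γ
  refine ⟨by omega, hnd.sublist (List.eraseIdx_sublist l γ), ?_, ?_⟩
  · -- dropLast bounds
    intro x hx
    apply hint
    rw [he, List.dropLast_append_of_ne_nil hdropne] at hx
    rw [List.dropLast_eq_take]
    rcases List.mem_append.mp hx with hx | hx
    · have h := List.take_take (i := γ) (j := l.length - 1) (l := l)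
      rw [min_eq_left (by omega)] at h
      rw [← h] at hx
      exact List.take_subset _ _ hx
    · -- x ∈ dropLast (drop (γ+1) l) = drop (γ+1) (take (len-1) l)
      rw [List.dropLast_eq_take, List.length_drop, List.take_drop] at hx
      have e : γ + 1 + (l.length - (γ+1) - 1) = l.length - 1 := by omega
      rw [e] at hx
      exact List.drop_subset _ _ hx
  · -- getLast?
    rw [he, List.getLast?_append_of_ne_nil _ hdropne]
    rcases List.eq_nil_or_concat (l.drop (γ+1)) with hnil | ⟨u, e, hue⟩
    · exact absurd hnil hdropne
    · have : l.getLast? = (l.take (γ+1) ++ l.drop (γ+1)).getLast? := by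
        rw [List.take_append_drop]
      rw [this, List.getLast?_append_of_ne_nil _ hdropne] at hlast
      exact hlast

end DEL

section NDP
variable {n : ℕ} {l : List ℕ}

lemma no_del_proper (hv : Valid19 n l) (h : ∀ γ, 1 ≤ γ → γ + 1 < l.length → ¬ Del l γ) :
    Proper n l := by
  have hlen := hv.1
  have hNE : ∀ γ, 1 ≤ γ → γ + 1 < l.length →
      ((∀ x ∈ l.take γ, x < K l γ) ∧ K l (γ+1) < K l γ) ∨
      ((∀ x ∈ l.take γ, K l γ < x) ∧ K l γ < K l (γ+1)) := by
    intro γ hγ1 hγ2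
    have hd := h γ hγ1 hγ2
    have hne : ∀ x ∈ l.take γ, x ≠ K l γ := by
      intro x hx
      obtain ⟨j, hjγ, hjl, rfl⟩ := take_mem_K hx
      exact kne hv (by omega) hjl (by omega)
    have hnn : K l (γ+1) ≠ K l γ := kne hv (by omega) (by omega) (by omega)
    by_cases hE1 : ∃ x ∈ l.take γ, x < K l γ
    · by_cases hE2 : ∃ y ∈ l.take γ, K l γ < y
      · exact absurd (Or.inl ⟨hE2, Or.inr hE1⟩) hd
      · push_neg at hE2
        have hall : ∀ x ∈ l.take γ, x < K l γ :=
          fun x hx => lt_of_le_of_ne (hE2 x hx) (hne x hx)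
        left
        refine ⟨hall, ?_⟩
        by_contra hc
        exact hd (Or.inr ⟨hE1, Or.inl (by omega)⟩)
    · push_neg at hE1
      have hall : ∀ x ∈ l.take γ, K l γ < x :=
        fun x hx => lt_of_le_of_ne (hE1 x hx) (Ne.symm (hne x hx))
      right
      refine ⟨hall, ?_⟩
      by_contra hc
      have hlt : K l (γ+1) < K l γ := by omega
      have hm0 : K l 0 ∈ l.take γ := mem_take_K (by omega) (by omega)
      exact hd (Or.inl ⟨⟨K l 0, hm0, hall _ hm0⟩, Or.inl hlt⟩)
  have hKg : ∀ i, l.getD i 0 = K l i := fun _ => rfl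
  refine ⟨hv.1, hv.2.1, ?_, hv.2.2.2, ?_, ?_⟩
  · intro x hx
    rw [List.mem_iff_getElem] at hx
    obtain ⟨i, hi, rfl⟩ := hx
    rw [← K_eq l hi]
    exact kmem hv hi
  · -- condition 5
    intro i hi
    simp only [hKg]
    have hK0 := kbound hv 0 (by omega)
    rcases hNE (i+1) (by omega) (by omega) with ⟨hall, hlt⟩ | ⟨hall, hlt⟩ <;> rw [show i+1+1 = i+2 from rfl] at hlt
    · have hK0lt : K l 0 < K l (i+1) := hall _ (mem_take_K (by omega) (by omega))
      have hKi2 : K l (i+2) < K l 0 := by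
        rcases Nat.lt_or_ge (i+3) l.length with h4 | h4
        · rcases hNE (i+2) (by omega) (by omega) with ⟨hall2, _⟩ | ⟨hall2, _⟩
          · have := hall2 (K l (i+1)) (mem_take_K (by omega) (by omega))
            omega
          · exact hall2 (K l 0) (mem_take_K (by omega) (by omega))
        · have hKi1 := kbound hv (i+1) (by omega)
          have he : i + 2 = l.length - 1 := by omega
          rcases klast hv with h0 | h0 <;> rw [← he] at h0 <;> omega
      exact Or.inr ⟨hKi2, hK0lt⟩
    · have hK0lt : K l (i+1) < K l 0 := hall _ (mem_take_K (by omega) (by omega))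
      have hKi2 : K l 0 < K l (i+2) := by
        rcases Nat.lt_or_ge (i+3) l.length with h4 | h4
        · rcases hNE (i+2) (by omega) (by omega) with ⟨hall2, _⟩ | ⟨hall2, _⟩
          · exact hall2 (K l 0) (mem_take_K (by omega) (by omega))
          · have := hall2 (K l (i+1)) (mem_take_K (by omega) (by omega))
            omega
        · have hKi1 := kbound hv (i+1) (by omega)
          have he : i + 2 = l.length - 1 := by omega
          rcases klast hv with h0 | h0 <;> rw [← he] at h0 <;> omega
      exact Or.inl ⟨hK0lt, hKi2⟩
  · -- condition 6
    intro i hi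
    simp only [hKg]
    have hK0 := kbound hv 0 (by omega)
    have hKi1 := kbound hv (i+1) (by omega)
    have hKi2 := kbound hv (i+2) (by omega)
    constructor
    · intro hlow
      rcases hNE (i+1) (by omega) (by omega) with ⟨hall, hlt⟩ | ⟨hall, hlt⟩ <;> rw [show i+1+1 = i+2 from rfl] at hlt
      · have := hall _ (mem_take_K (show 0 < i+1 by omega) (by omega))
        omega
      · rcases hNE (i+2) (by omega) (by omega) with ⟨hall2, hlt2⟩ | ⟨hall2, hlt2⟩ <;> rw [show i+2+1 = i+3 from rfl] at hlt2
        · rcases Nat.lt_or_ge (i+4) l.length with h4 | h4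
          · rcases hNE (i+3) (by omega) (by omega) with ⟨hall3, _⟩ | ⟨hall3, _⟩
            · have := hall3 (K l (i+2)) (mem_take_K (by omega) (by omega))
              omega
            · exact hall3 (K l (i+1)) (mem_take_K (by omega) (by omega))
          · have he : i + 3 = l.length - 1 := by omega
            rcases klast hv with h0 | h0 <;> rw [← he] at h0 <;> omega
        · have := hall2 (K l (i+1)) (mem_take_K (by omega) (by omega))
          omega
    · intro hhigh
      rcases hNE (i+1) (by omega) (by omega) with ⟨hall, hlt⟩ | ⟨hall, hlt⟩ <;> rw [show i+1+1 = i+2 from rfl] at hlt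
      · rcases hNE (i+2) (by omega) (by omega) with ⟨hall2, hlt2⟩ | ⟨hall2, hlt2⟩ <;> rw [show i+2+1 = i+3 from rfl] at hlt2
        · have := hall2 (K l (i+1)) (mem_take_K (by omega) (by omega))
          omega
        · rcases Nat.lt_or_ge (i+4) l.length with h4 | h4
          · rcases hNE (i+3) (by omega) (by omega) with ⟨hall3, _⟩ | ⟨hall3, _⟩
            · exact hall3 (K l (i+1)) (mem_take_K (by omega) (by omega))
            · have := hall3 (K l (i+2)) (mem_take_K (by omega) (by omega))
              omega
          · have he : i + 3 = l.length - 1 := by omega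
            rcases klast hv with h0 | h0 <;> rw [← he] at h0 <;> omega
      · have := hall _ (mem_take_K (show 0 < i+1 by omega) (by omega))
        omega

lemma not_proper_del (hv : Valid19 n l) (hnp : ¬ Proper n l) :
    ∃ γ, 1 ≤ γ ∧ γ + 1 < l.length ∧ Valid19 n (l.eraseIdx γ) ∧
      (∀ A s, R A s (l.eraseIdx γ) = R A s l) := by
  have hne : ¬ ∀ γ, 1 ≤ γ → γ + 1 < l.length → ¬ Del l γ :=
    fun hall => hnp (no_del_proper hv hall)
  push_neg at hne
  obtain ⟨γ, h1, h2, hdel⟩ := hne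
  exact ⟨γ, h1, h2, del_valid hv h1 h2, del_R h1 h2 hdel⟩

end NDP

lemma phi_eq_of_R_eq {n : ℕ} {l l' : List ℕ}
    (hl : l.getLast? = some 0 ∨ l.getLast? = some (n+1))
    (hl' : l'.getLast? = some 0 ∨ l'.getLast? = some (n+1))
    (h : ∀ A s, R A s l' = R A s l) : phi n l' = phi n l := by
  funext P
  rw [phi_eq_R hl' P, phi_eq_R hl P, h]

end S19

/-- for an onto extended quota majority method, a representing tuple
has minimum length iff it is proper; moreover any non-proper representation can be
strictly shortened by deleting one entry. -/
theorem stmt_19 (n : ℕ) (hn : 1 ≤ n) (l : List ℕ) (hv : Valid19 n l)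
    (honto : Function.Surjective (phi n l)) :
    (Proper n l ↔
      ∀ l' : List ℕ, Valid19 n l' → phi n l' = phi n l →
        l.length - 1 ≤ l'.length - 1) ∧
    (¬ Proper n l → ∃ γ, γ + 1 < l.length ∧ Valid19 n (l.eraseIdx γ) ∧
      phi n (l.eraseIdx γ) = phi n l) := by
  have hdel : ¬ Proper n l → ∃ γ, γ + 1 < l.length ∧ Valid19 n (l.eraseIdx γ) ∧
      phi n (l.eraseIdx γ) = phi n l := by
    intro hnp
    obtain ⟨γ, h1, h2, hval, hReq⟩ := S19.not_proper_del hv hnp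
    exact ⟨γ, h2, hval, S19.phi_eq_of_R_eq hv.2.2.2 hval.2.2.2 (fun A s => hReq A s)⟩
  refine ⟨⟨?_, ?_⟩, hdel⟩
  · intro hp l' hv' hphi
    have hR := S19.R_eq_of_phi_eq hv.2.2.2 hv'.2.2.2 hphi
    have := S19.proper_min hv hp hv' hR
    have := hv.1
    have := hv'.1
    omega
  · intro hmin
    by_contra hnp
    obtain ⟨γ, h2, hval, hphi⟩ := hdel hnp
    have hlen : (l.eraseIdx γ).length = l.length - 1 := by
      rw [List.length_eraseIdx]
      simp [show γ < l.length by omega]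
    have := hmin (l.eraseIdx γ) hval hphi
    have := hv.1
    omega
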